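/- Let c > 1, and for each sufficiently small γ > 0 let z*_{c,γ} denote the unique positive solution of ψ₁(z) = c·ψ₁(z + γ). Then lim_{γ → 0+} z*_{c,γ} / γ = 1/(√c − 1). -/

import Mathlib

set_option maxHeartbeats 1600000

open Filter

/-- The digamma function `ψ(x) = (d/dx) log Γ(x)`. -/
noncomputable def digamma (x : ℝ) : ℝ := deriv (fun y => Real.log (Real.Gamma y)) x

/-- The trigamma function `ψ₁ = ψ'`. -/
noncomputable def trigamma : ℝ → ℝ := deriv digamma

namespace CPA
open Filter Finset Nat


lemma base_summable : Summable (fun k : ℕ => 1 / ((k : ℝ) + 1) ^ 2) := by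
  have h : Summable (fun n : ℕ => 1 / (n : ℝ) ^ 2) :=
    Real.summable_one_div_nat_pow.mpr one_lt_two
  have := (summable_nat_add_iff 1).mpr h
  refine this.congr fun n => ?_
  push_cast
  ring

lemma summable_S {x : ℝ} (hx : 0 < x) : Summable (fun k : ℕ => 1 / (x + k) ^ 2) := by
  apply (summable_nat_add_iff 1).mp
  refine base_summable.of_nonneg_of_le (fun k => by positivity) (fun k => ?_)
  have h1 : (0:ℝ) < (k:ℝ) + 1 := by positivity
  have h2 : ((k:ℝ) + 1) ≤ x + ((k:ℕ) + 1 : ℕ) := by push_cast; linarith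
  have h3 : ((k:ℝ) + 1)^2 ≤ (x + ((k:ℕ) + 1 : ℕ))^2 := by
    apply pow_le_pow_left₀ h1.le h2
  rw [div_le_div_iff₀ (by positivity) (by positivity)]
  nlinarith
lemma hasSum_tele {x : ℝ} (hx : 0 < x) :
    HasSum (fun k : ℕ => 1 / (x + k) - 1 / (x + k + 1)) (1 / x) := by
  have hnn : ∀ k : ℕ, 0 ≤ 1 / (x + k) - 1 / (x + k + 1) := by
    intro k
    have h1 : (0:ℝ) < x + k := by positivity
    rw [sub_nonneg]
    apply div_le_div_of_nonneg_left one_pos.le h1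
    linarith
  rw [hasSum_iff_tendsto_nat_of_nonneg hnn]
  have hps : ∀ n : ℕ, ∑ i ∈ range n, (1 / (x + i) - 1 / (x + i + 1)) = 1 / x - 1 / (x + n) := by
    intro n
    have h := Finset.sum_range_sub' (f := fun k : ℕ => 1 / (x + k)) n
    have h2 : ∑ i ∈ range n, (1 / (x + i) - 1 / (x + i + 1))
        = ∑ i ∈ range n, (1 / (x + i) - 1 / (x + (i+1 : ℕ))) := by
      apply Finset.sum_congr rfl; intro i _; push_cast; ring_nf
    rw [h2, h]
    norm_num
  have htend : Tendsto (fun n : ℕ => 1 / (x + n)) atTop (nhds 0) := by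
    apply Tendsto.comp tendsto_inv_atTop_zero (by simpa using tendsto_atTop_add_const_left atTop x tendsto_natCast_atTop_atTop) |>.congr
    intro n; simp [one_div]
  have := (tendsto_const_nhds (x := 1/x) (f := atTop (α := ℕ))).sub htend
  simp only [sub_zero] at this
  exact this.congr fun n => (hps n).symm

lemma summable_tele {x : ℝ} (hx : 0 < x) :
    Summable (fun k : ℕ => 1 / (x + k) - 1 / (x + k + 1)) := (hasSum_tele hx).summable

lemma tsum_tele {x : ℝ} (hx : 0 < x) :
    ∑' k : ℕ, (1 / (x + k) - 1 / (x + k + 1)) = 1 / x := (hasSum_tele hx).tsum_eq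


noncomputable def Sfun (x : ℝ) : ℝ := ∑' k : ℕ, 1 / (x + k) ^ 2
noncomputable def Kc : ℝ := ∑' k : ℕ, 1 / ((k : ℝ) + 1) ^ 2

lemma Kc_nonneg : 0 ≤ Kc := tsum_nonneg fun k => by positivity

lemma S_ge_sq {x : ℝ} (hx : 0 < x) : 1 / x ^ 2 ≤ Sfun x := by
  have h := (summable_S hx).le_tsum 0 (fun j _ => by positivity)
  simpa [Sfun] using h

lemma S_le_sq_add_K {x : ℝ} (hx : 0 < x) : Sfun x ≤ 1 / x ^ 2 + Kc := by
  rw [Sfun, (summable_S hx).tsum_eq_zero_add]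
  refine add_le_add (by norm_num) ?_
  refine Summable.tsum_le_tsum (fun k => ?_) ((summable_nat_add_iff 1).mpr (summable_S hx)) base_summable
  push_cast
  refine div_le_div_of_nonneg_left one_pos.le (by positivity) ?_
  have hk : (0:ℝ) ≤ (k:ℝ) := k.cast_nonneg
  nlinarith

lemma S_ge_inv {x : ℝ} (hx : 0 < x) : 1 / x ≤ Sfun x := by
  rw [← tsum_tele hx]
  refine Summable.tsum_le_tsum (fun k => ?_) (summable_tele hx) (summable_S hx)
  have h1 : (0:ℝ) < x + k := by positivity
  have h2 : (0:ℝ) < x + k + 1 := by linarith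
  have h3 : 1 / (x + k) - 1 / (x + k + 1) = 1 / ((x + k) * (x + k + 1)) := by
    field_simp
    ring
  rw [h3, div_le_div_iff₀ (by positivity) (by positivity)]
  nlinarith

lemma S_le_sq_add_inv {x : ℝ} (hx : 0 < x) : Sfun x ≤ 1 / x ^ 2 + 1 / x := by
  rw [Sfun, (summable_S hx).tsum_eq_zero_add, ← tsum_tele hx]
  refine add_le_add (by norm_num) ?_
  refine Summable.tsum_le_tsum (fun k => ?_) ((summable_nat_add_iff 1).mpr (summable_S hx)) (summable_tele hx)
  push_cast
  have h1 : (0:ℝ) < x + k := by positivity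
  have h2 : (0:ℝ) < x + k + 1 := by linarith
  have h3 : 1 / (x + k) - 1 / (x + k + 1) = 1 / ((x + k) * (x + k + 1)) := by
    field_simp
    ring
  have h4 : x + ((k:ℝ) + 1) = x + k + 1 := by ring
  rw [h4, h3, div_le_div_iff₀ (by positivity) (by positivity)]
  nlinarith

lemma S_pos {x : ℝ} (hx : 0 < x) : 0 < Sfun x :=
  lt_of_lt_of_le (by positivity) (S_ge_sq hx)

lemma summable_S' {x γ : ℝ} (hx : 0 < x) (hγ : 0 < γ) :
    Summable (fun k : ℕ => 1 / (x + γ + k) ^ 2) :=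
  (summable_S (by linarith : (0:ℝ) < x + γ)).congr fun k => by ring_nf

lemma Sfun_shift {x γ : ℝ} : Sfun (x + γ) = ∑' k : ℕ, 1 / (x + γ + k) ^ 2 := rfl

lemma S_diff_le {x γ : ℝ} (hx : 0 < x) (hγ : 0 < γ) :
    Sfun x - Sfun (x + γ) ≤ 2 * γ / x * Sfun x := by
  rw [Sfun_shift, Sfun, ← Summable.tsum_sub (summable_S hx) (summable_S' hx hγ)]
  have hs2 : Summable (fun k : ℕ => 2 * γ / x * (1 / (x + k) ^ 2)) :=
    (summable_S hx).mul_left _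
  calc ∑' k : ℕ, (1 / (x + k) ^ 2 - 1 / (x + γ + k) ^ 2)
      ≤ ∑' k : ℕ, 2 * γ / x * (1 / (x + k) ^ 2) := by
        refine Summable.tsum_le_tsum (fun k => ?_) ((summable_S hx).sub (summable_S' hx hγ)) hs2
        have h1 : (0:ℝ) < x + k := by positivity
        have h2 : (0:ℝ) < x + γ + k := by linarith
        have h3 : 1 / (x + k) ^ 2 - 1 / (x + γ + k) ^ 2
            = ((x + γ + k) ^ 2 - (x + k) ^ 2) / ((x + k) ^ 2 * (x + γ + k) ^ 2) := by
          field_simp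
        have h4 : 2 * γ / x * (1 / (x + k) ^ 2) = 2 * γ / (x * (x + k) ^ 2) := by
          rw [_root_.div_mul_div_comm, mul_one]
        rw [h3, h4, div_le_div_iff₀ (by positivity) (by positivity)]
        have hk : (0:ℝ) ≤ (k:ℝ) := k.cast_nonneg
        have hb : x ≤ x + γ + (k:ℝ) := by linarith
        have h5 : x * ((x + k) + (x + γ + k)) ≤ (x + γ + k) * (2 * (x + γ + k)) :=
          mul_le_mul hb (by linarith) (by linarith) (by linarith)
        have h6 := mul_le_mul_of_nonneg_left h5 (by positivity : (0:ℝ) ≤ γ * (x + k) ^ 2)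
        nlinarith [h6]
    _ = 2 * γ / x * Sfun x := tsum_mul_left



noncomputable def lgs (n : ℕ) (x : ℝ) : ℝ :=
  x * Real.log n + Real.log (n !) - ∑ k ∈ range (n + 1), Real.log (x + k)

noncomputable def dgs (n : ℕ) (x : ℝ) : ℝ :=
  Real.log n - ∑ k ∈ range (n + 1), 1 / (x + k)

noncomputable def d2gs (n : ℕ) (x : ℝ) : ℝ := ∑ k ∈ range (n + 1), 1 / (x + k) ^ 2

noncomputable def psiAux (x : ℝ) : ℝ :=
  -Real.eulerMascheroniConstant - 1 / x + ∑' k : ℕ, (1 / ((k : ℝ) + 1) - 1 / (x + k + 1))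

lemma log_GammaSeq_eq {x : ℝ} (hx : 0 < x) {n : ℕ} (hn : 1 ≤ n) :
    Real.log (Real.GammaSeq x n) = lgs n x := by
  have hn' : (0:ℝ) < n := by exact_mod_cast hn
  have hfac : (0:ℝ) < (n ! : ℝ) := by exact_mod_cast n.factorial_pos
  have hprod : ∀ j ∈ range (n + 1), x + (j : ℝ) ≠ 0 := by
    intro j _
    have : (0:ℝ) ≤ (j:ℝ) := j.cast_nonneg
    positivity
  rw [Real.GammaSeq, Real.log_div (by positivity) (Finset.prod_ne_zero_iff.mpr hprod),
    Real.log_mul (by positivity) hfac.ne', Real.log_rpow hn', Real.log_prod hprod, lgs]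

lemma lgs_tendsto {x : ℝ} (hx : 0 < x) :
    Tendsto (fun n => lgs n x) atTop (nhds (Real.log (Real.Gamma x))) := by
  have h1 : Tendsto (fun n => Real.log (Real.GammaSeq x n)) atTop
      (nhds (Real.log (Real.Gamma x))) :=
    ((Real.continuousAt_log (Real.Gamma_pos_of_pos hx).ne').tendsto).comp
      (Real.GammaSeq_tendsto_Gamma x)
  refine h1.congr' ?_
  filter_upwards [eventually_ge_atTop 1] with n hn
  exact log_GammaSeq_eq hx hn

lemma hasDerivAt_lgs {x : ℝ} (hx : 0 < x) (n : ℕ) :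
    HasDerivAt (lgs n) (dgs n x) x := by
  have hsum : HasDerivAt (fun y : ℝ => ∑ k ∈ range (n + 1), Real.log (y + k))
      (∑ k ∈ range (n + 1), 1 / (x + k)) x := by
    apply HasDerivAt.fun_sum
    intro k _
    have hk : (0:ℝ) < x + k := by positivity
    have h := (Real.hasDerivAt_log hk.ne').comp x ((hasDerivAt_id x).add_const (k:ℝ))
    simpa [one_div, Function.comp_def] using h
  have h1 : HasDerivAt (fun y : ℝ => y * Real.log n + Real.log (n !))
      (Real.log n) x := by
    simpa using ((hasDerivAt_id x).mul_const (Real.log n)).add_const (Real.log (n !))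
  exact h1.sub hsum

lemma hasDerivAt_dgs {x : ℝ} (hx : 0 < x) (n : ℕ) :
    HasDerivAt (dgs n) (d2gs n x) x := by
  have hsum : HasDerivAt (fun y : ℝ => ∑ k ∈ range (n + 1), 1 / (y + k))
      (∑ k ∈ range (n + 1), -(1 / (x + k) ^ 2)) x := by
    apply HasDerivAt.fun_sum
    intro k _
    have hk : (0:ℝ) < x + k := by positivity
    have h := ((hasDerivAt_id x).add_const (k:ℝ)).inv hk.ne'
    simpa [one_div, neg_div, Pi.inv_def] using h
  have h1 : HasDerivAt (fun _ : ℝ => Real.log n) 0 x := hasDerivAt_const x _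
  have h2 := h1.sub hsum
  rw [zero_sub, ← Finset.sum_neg_distrib] at h2
  simp only [neg_neg] at h2
  exact h2



lemma TU_shift {F : ℕ → ℝ → ℝ} {f : ℝ → ℝ} {s : Set ℝ}
    (h : TendstoUniformlyOn F f atTop s) :
    TendstoUniformlyOn (fun n => F (n + 1)) f atTop s :=
  fun u hu => (tendsto_add_atTop_nat 1).eventually (h u hu)

lemma TU_of_const {f : ℝ → ℝ} {s : Set ℝ} :
    TendstoUniformlyOn (fun _ : ℕ => f) f atTop s :=
  fun u hu => Eventually.of_forall fun _ y _ => refl_mem_uniformity hu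

lemma harmonic_cast (n : ℕ) :
    ((harmonic n : ℚ) : ℝ) = ∑ i ∈ range n, 1 / ((i : ℝ) + 1) := by
  rw [harmonic]
  push_cast
  simp [one_div]

lemma dgs_eq (n : ℕ) (x : ℝ) :
    dgs n x = (Real.log n - harmonic n) +
      (-(1 / x) + ∑ k ∈ range n, (1 / ((k : ℝ) + 1) - 1 / (x + k + 1))) := by
  rw [dgs, Finset.sum_range_succ' (fun k : ℕ => 1 / (x + k)) n]
  have hs : ∑ i ∈ range n, 1 / (x + ((i + 1 : ℕ) : ℝ)) = ∑ i ∈ range n, 1 / (x + i + 1) :=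
    Finset.sum_congr rfl fun i _ => by push_cast; ring_nf
  rw [hs, Finset.sum_sub_distrib, harmonic_cast]
  push_cast
  ring

lemma TU_dgs {b : ℝ} (hb : 0 < b) :
    TendstoUniformlyOn dgs psiAux atTop (Set.Ioo 0 b) := by
  have hA : TendstoUniformlyOn (fun (n : ℕ) (_ : ℝ) => Real.log n - (harmonic n : ℝ))
      (fun _ => -Real.eulerMascheroniConstant) atTop (Set.Ioo 0 b) := by
    have h0 : Tendsto (fun n : ℕ => Real.log n - (harmonic n : ℝ)) atTop
        (nhds (-Real.eulerMascheroniConstant)) := by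
      have := Real.tendsto_harmonic_sub_log.neg
      refine this.congr fun n => by push_cast; ring
    exact h0.tendstoUniformlyOn_const _
  have hB : TendstoUniformlyOn
      (fun n (x : ℝ) => ∑ k ∈ range n, (1 / ((k : ℝ) + 1) - 1 / (x + k + 1)))
      (fun x => ∑' k : ℕ, (1 / ((k : ℝ) + 1) - 1 / (x + k + 1))) atTop (Set.Ioo 0 b) := by
    apply tendstoUniformlyOn_tsum_nat (u := fun k : ℕ => b * (1 / ((k : ℝ) + 1) ^ 2))
      (base_summable.mul_left b)
    intro k x hx
    obtain ⟨hx0, hxb⟩ := hx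
    have h1 : (0:ℝ) < (k : ℝ) + 1 := by positivity
    have h2 : (0:ℝ) < x + k + 1 := by positivity
    have h3 : 1 / ((k : ℝ) + 1) - 1 / (x + k + 1) = x / (((k : ℝ) + 1) * (x + k + 1)) := by
      field_simp
      ring
    rw [Real.norm_eq_abs, h3, abs_of_nonneg (by positivity)]
    rw [div_le_iff₀ (by positivity)]
    have : b * (1 / ((k : ℝ) + 1) ^ 2) * (((k : ℝ) + 1) * (x + k + 1))
        = b * ((x + k + 1) / ((k : ℝ) + 1)) := by
      field_simp
    rw [this]
    have h4 : (1:ℝ) ≤ (x + k + 1) / ((k : ℝ) + 1) := by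
      rw [le_div_iff₀ h1]
      linarith
    nlinarith
  have hC : TendstoUniformlyOn (fun (_ : ℕ) (x : ℝ) => -(1 / x)) (fun x => -(1 / x))
      atTop (Set.Ioo 0 b) := TU_of_const
  have := hA.add (hC.add hB)
  refine (this.congr (Eventually.of_forall fun n x _ => ?_)).congr_right fun x _ => ?_
  · simp only [Pi.add_apply]
    exact (dgs_eq n x).symm
  · simp only [Pi.add_apply, psiAux]
    ring

lemma TLU_dgs : TendstoLocallyUniformlyOn dgs psiAux atTop (Set.Ioi 0) := by
  intro u hu x hx
  have hx0 : (0:ℝ) < x := hx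
  refine ⟨Set.Ioo 0 (x + 1), mem_nhdsWithin_of_mem_nhds
    (Ioo_mem_nhds hx0 (lt_add_one x)), ?_⟩
  exact TU_dgs (by linarith) u hu

lemma TLU_d2gs : TendstoLocallyUniformlyOn d2gs Sfun atTop (Set.Ioi 0) := by
  intro u hu x hx
  have hx0 : (0:ℝ) < x := hx
  refine ⟨Set.Ioi (x / 2), mem_nhdsWithin_of_mem_nhds
    (Ioi_mem_nhds (by linarith)), ?_⟩
  have hU : TendstoUniformlyOn (fun N (y : ℝ) => ∑ k ∈ range N, 1 / (y + k) ^ 2)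
      Sfun atTop (Set.Ioi (x / 2)) := by
    apply tendstoUniformlyOn_tsum_nat (u := fun k : ℕ => 1 / (x / 2 + k) ^ 2)
      (summable_S (by linarith))
    intro k y hy
    have hy2 : x / 2 < y := hy
    have h1 : (0:ℝ) < x / 2 + k := by positivity
    rw [Real.norm_eq_abs, abs_of_nonneg (by positivity)]
    apply div_le_div_of_nonneg_left one_pos.le (by positivity)
    nlinarith
  exact TU_shift hU u hu


lemma hasDerivAt_logGamma {x : ℝ} (hx : 0 < x) :
    HasDerivAt (fun y => Real.log (Real.Gamma y)) (psiAux x) x :=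
  hasDerivAt_of_tendstoLocallyUniformlyOn isOpen_Ioi TLU_dgs
    (Eventually.of_forall fun n y hy => hasDerivAt_lgs hy n)
    (fun y hy => lgs_tendsto hy) hx

lemma digamma_eq {x : ℝ} (hx : 0 < x) : digamma x = psiAux x :=
  (hasDerivAt_logGamma hx).deriv

lemma hasDerivAt_psiAux {x : ℝ} (hx : 0 < x) : HasDerivAt psiAux (Sfun x) x :=
  hasDerivAt_of_tendstoLocallyUniformlyOn isOpen_Ioi TLU_d2gs
    (Eventually.of_forall fun n y hy => hasDerivAt_dgs hy n)
    (fun y hy => TLU_dgs.tendsto_at hy) hx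

lemma trigamma_eq {x : ℝ} (hx : 0 < x) : trigamma x = Sfun x := by
  have he : digamma =ᶠ[nhds x] psiAux := by
    filter_upwards [IsOpen.mem_nhds isOpen_Ioi hx] with y hy using digamma_eq hy
  rw [trigamma, he.deriv_eq, (hasDerivAt_psiAux hx).deriv]



section main
variable {c s z γ : ℝ}

lemma z_le_Z (hc : 1 < c) (hs2 : s * s = c) (hs1 : 1 < s)
    (hz : 0 < z) (hγ : 0 < γ) (hγ1 : γ ≤ 1)
    (heq : Sfun z = c * Sfun (z + γ)) : z ≤ 1 / (s - 1) := by
  have hzγ : 0 < z + γ := by linarith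
  have h1 : c / (z + 1) ≤ 1 / z ^ 2 + 1 / z := by
    calc c / (z + 1) ≤ c / (z + γ) := by
          apply div_le_div_of_nonneg_left (by linarith) hzγ (by linarith)
      _ ≤ c * Sfun (z + γ) := by
          rw [div_eq_mul_one_div]
          exact mul_le_mul_of_nonneg_left (S_ge_inv hzγ) (by linarith)
      _ = Sfun z := heq.symm
      _ ≤ 1 / z ^ 2 + 1 / z := S_le_sq_add_inv hz
  have h2 : c * z ^ 2 ≤ (1 + z) ^ 2 := by
    rw [div_le_iff₀ (by linarith)] at h1
    have hzz : (0:ℝ) < z ^ 2 := by positivity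
    have := mul_le_mul_of_nonneg_right h1 hzz.le
    have hexp : (1 / z ^ 2 + 1 / z) * (z + 1) * z ^ 2 = (1 + z) ^ 2 := by
      field_simp
      ring
    nlinarith [this]
  have h3 : s * z ≤ 1 + z := by
    by_contra hcon
    push_neg at hcon
    have hpos : (0:ℝ) ≤ 1 + z := by linarith
    have := mul_lt_mul'' hcon hcon hpos hpos
    nlinarith
  rw [le_div_iff₀ (by linarith : (0:ℝ) < s - 1)]
  nlinarith

lemma gamma_lower (hc : 1 < c) (hs2 : s * s = c) (hs1 : 1 < s)
    (hz : 0 < z) (hγ : 0 < γ) (hγ1 : γ ≤ 1)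
    (heq : Sfun z = c * Sfun (z + γ)) {δ : ℝ} (hδ : 0 < δ) (hδz : δ ≤ z) :
    (c - 1) / (1 / (s - 1) + 1) ≤ 2 * γ / δ * (1 / δ ^ 2 + 1 / δ) := by
  have hzγ : 0 < z + γ := by linarith
  have hZ : z ≤ 1 / (s - 1) := z_le_Z hc hs2 hs1 hz hγ hγ1 heq
  have hs1' : (0:ℝ) < s - 1 := by linarith
  have hZ1 : (0:ℝ) < 1 / (s - 1) + 1 := by positivity
  calc (c - 1) / (1 / (s - 1) + 1)
      ≤ (c - 1) / (z + γ) := by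
        apply div_le_div_of_nonneg_left (by linarith) hzγ (by linarith)
    _ ≤ (c - 1) * Sfun (z + γ) := by
        rw [div_eq_mul_one_div]
        exact mul_le_mul_of_nonneg_left (S_ge_inv hzγ) (by linarith)
    _ = Sfun z - Sfun (z + γ) := by rw [heq]; ring
    _ ≤ 2 * γ / z * Sfun z := S_diff_le hz hγ
    _ ≤ 2 * γ / δ * (1 / δ ^ 2 + 1 / δ) := by
        have hS1 : Sfun z ≤ 1 / z ^ 2 + 1 / z := S_le_sq_add_inv hz
        have hS2 : (0:ℝ) ≤ Sfun z := le_trans (by positivity) (S_ge_inv hz)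
        have hd1 : 2 * γ / z ≤ 2 * γ / δ :=
          div_le_div_of_nonneg_left (by linarith) hδ hδz
        have hd2 : Sfun z ≤ 1 / δ ^ 2 + 1 / δ := by
          refine hS1.trans ?_
          have ha : 1 / z ^ 2 ≤ 1 / δ ^ 2 :=
            div_le_div_of_nonneg_left one_pos.le (by positivity) (by nlinarith)
          have hb : 1 / z ≤ 1 / δ :=
            div_le_div_of_nonneg_left one_pos.le (by positivity) hδz
          linarith
        exact mul_le_mul hd1 hd2 hS2 (by positivity)

lemma main_abs (hc : 1 < c) (hs2 : s * s = c) (hs1 : 1 < s)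
    (hz : 0 < z) (hγ : 0 < γ)
    (heq : Sfun z = c * Sfun (z + γ)) :
    |(s - 1) * z - γ| ≤ (c + 1) * (Kc + 1) * z ^ 2 * (z + γ) := by
  set t := z + γ with ht
  have ht0 : 0 < t := by simp only [ht]; linarith
  have hr₁0 : 0 ≤ Sfun z - 1 / z ^ 2 := by rw [sub_nonneg]; exact S_ge_sq hz
  have hr₁K : Sfun z - 1 / z ^ 2 ≤ Kc := by
    have := S_le_sq_add_K hz; linarith
  have hr₂0 : 0 ≤ Sfun t - 1 / t ^ 2 := by rw [sub_nonneg]; exact S_ge_sq ht0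
  have hr₂K : Sfun t - 1 / t ^ 2 ≤ Kc := by
    have := S_le_sq_add_K ht0; linarith
  have e4 : c * z ^ 2 - t ^ 2
      = ((Sfun z - 1 / z ^ 2) - c * (Sfun t - 1 / t ^ 2)) * (z ^ 2 * t ^ 2) := by
    have hz2' : z ^ 2 * (1 / z ^ 2) = 1 := by field_simp
    have ht2' : t ^ 2 * (1 / t ^ 2) = 1 := by field_simp
    linear_combination (t ^ 2) * hz2' - (c * z ^ 2) * ht2' - (z ^ 2 * t ^ 2) * heq
  set M := (c + 1) * (Kc + 1) with hM
  have hM0 : 0 < M := by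
    have := Kc_nonneg; positivity
  have habs : |c * z ^ 2 - t ^ 2| ≤ M * (z ^ 2 * t ^ 2) := by
    rw [e4, abs_mul, abs_of_nonneg (by positivity : (0:ℝ) ≤ z ^ 2 * t ^ 2)]
    apply mul_le_mul_of_nonneg_right _ (by positivity)
    rw [abs_le]
    have := Kc_nonneg
    constructor
    · nlinarith
    · nlinarith
  have hst : 0 < s * z + t := by nlinarith
  have h6 : |s * z - t| * t ≤ (M * z ^ 2 * t) * t := by
    calc |s * z - t| * t ≤ |s * z - t| * (s * z + t) := by
          apply mul_le_mul_of_nonneg_left _ (abs_nonneg _)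
          nlinarith
      _ = |c * z ^ 2 - t ^ 2| := by
          rw [← abs_of_pos hst, ← abs_mul]
          congr 1
          nlinarith
      _ ≤ M * (z ^ 2 * t ^ 2) := habs
      _ = (M * z ^ 2 * t) * t := by ring
  have h7 : |s * z - t| ≤ M * z ^ 2 * t := le_of_mul_le_mul_right h6 ht0
  have h8 : (s - 1) * z - γ = s * z - t := by simp only [ht]; ring
  rw [h8]
  exact h7

end main


end CPA

open CPA

/-- If, for each sufficiently small `γ > 0`, `zstar γ` is a (the unique) positive solution of
`ψ₁(z) = c·ψ₁(z + γ)`, then `zstar γ / γ → 1/(√c - 1)` as `γ → 0+`. -/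
theorem critical_point_asymptotics (c : ℝ) (hc : 1 < c)
    (γ₀ : ℝ) (hγ₀ : 0 < γ₀) (zstar : ℝ → ℝ)
    (hz : ∀ γ : ℝ, 0 < γ → γ < γ₀ →
      0 < zstar γ ∧ trigamma (zstar γ) = c * trigamma (zstar γ + γ)) :
    Tendsto (fun γ => zstar γ / γ) (nhdsWithin 0 (Set.Ioi 0))
      (nhds (1 / (Real.sqrt c - 1))) := by
  have hc0 : (0:ℝ) < c := by linarith
  set s := Real.sqrt c with hsdef
  have hs2 : s * s = c := Real.mul_self_sqrt hc0.le
  have hs1 : 1 < s := by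
    rw [hsdef, show (1:ℝ) = Real.sqrt 1 from Real.sqrt_one.symm]
    exact Real.sqrt_lt_sqrt (by norm_num) hc
  have hs1' : (0:ℝ) < s - 1 := by linarith
  set M := (c + 1) * (Kc + 1) with hM
  have hKc := Kc_nonneg
  have hM0 : 0 < M := by positivity
  have hSeq : ∀ γ : ℝ, 0 < γ → γ < γ₀ → Sfun (zstar γ) = c * Sfun (zstar γ + γ) := by
    intro γ h1 h2
    obtain ⟨hz0, he⟩ := hz γ h1 h2
    rw [← trigamma_eq hz0, ← trigamma_eq (by linarith)]
    exact he
  have hsmall : ∀ δ : ℝ, 0 < δ →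
      ∀ᶠ γ in nhdsWithin 0 (Set.Ioi 0), zstar γ < δ := by
    intro δ hδ
    have hA0 : (0:ℝ) < (c - 1) / (1 / (s - 1) + 1) := by
      apply div_pos (by linarith)
      have := one_div_pos.mpr hs1'
      linarith
    have hB0 : (0:ℝ) < 2 / δ * (1 / δ ^ 2 + 1 / δ) :=
      mul_pos (div_pos two_pos hδ)
        (add_pos (div_pos one_pos (pow_pos hδ 2)) (div_pos one_pos hδ))
    set γ₁ := (c - 1) / (1 / (s - 1) + 1) / (2 / δ * (1 / δ ^ 2 + 1 / δ)) with hγ₁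
    have hγ₁0 : 0 < γ₁ := div_pos hA0 hB0
    have hmin : (0:ℝ) < min γ₀ (min 1 γ₁) := lt_min hγ₀ (lt_min one_pos hγ₁0)
    filter_upwards [Ioo_mem_nhdsGT_of_mem (Set.mem_Ico.mpr ⟨le_refl (0:ℝ), hmin⟩)]
      with γ hγmem
    obtain ⟨hγpos, hγlt⟩ := hγmem
    have hγγ₀ : γ < γ₀ := lt_of_lt_of_le hγlt (min_le_left _ _)
    have hγ1 : γ ≤ 1 := le_of_lt (lt_of_lt_of_le hγlt ((min_le_right _ _).trans (min_le_left _ _)))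
    have hγγ₁ : γ < γ₁ := lt_of_lt_of_le hγlt ((min_le_right _ _).trans (min_le_right _ _))
    by_contra hcon
    push_neg at hcon
    have hz0 := (hz γ hγpos hγγ₀).1
    have hlow := gamma_lower hc hs2 hs1 hz0 hγpos hγ1 (hSeq γ hγpos hγγ₀) hδ hcon
    have h2 : 2 * γ / δ * (1 / δ ^ 2 + 1 / δ) = γ * (2 / δ * (1 / δ ^ 2 + 1 / δ)) := by
      ring
    rw [h2] at hlow
    rw [hγ₁, lt_div_iff₀ hB0] at hγγ₁
    linarith
  rw [Metric.tendsto_nhds]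
  intro ε hε
  have hδ0 : (0:ℝ) < min 1 (min ((s - 1) / (4 * M)) (ε * (s - 1) ^ 2 / (8 * M))) := by
    positivity
  set δ := min 1 (min ((s - 1) / (4 * M)) (ε * (s - 1) ^ 2 / (8 * M))) with hδdef
  have hδ1 : δ ≤ 1 := min_le_left _ _
  have hδ2 : δ ≤ (s - 1) / (4 * M) := (min_le_right _ _).trans (min_le_left _ _)
  have hδ3 : δ ≤ ε * (s - 1) ^ 2 / (8 * M) := (min_le_right _ _).trans (min_le_right _ _)
  have hmin2 : (0:ℝ) < min γ₀ 1 := lt_min hγ₀ one_pos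
  filter_upwards [hsmall δ hδ0,
    Ioo_mem_nhdsGT_of_mem (Set.mem_Ico.mpr ⟨le_refl (0:ℝ), hmin2⟩)] with γ hzlt hγmem
  obtain ⟨hγpos, hγlt⟩ := hγmem
  have hγγ₀ : γ < γ₀ := lt_of_lt_of_le hγlt (min_le_left _ _)
  have hγ1 : γ ≤ 1 := le_of_lt (lt_of_lt_of_le hγlt (min_le_right _ _))
  have hz0 := (hz γ hγpos hγγ₀).1
  set z := zstar γ with hzdef
  have heqS := hSeq γ hγpos hγγ₀
  have habs := main_abs hc hs2 hs1 hz0 hγpos heqS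
  have hzγ1 : z + γ ≤ δ + 1 := by linarith [le_of_lt hzlt]
  have hMsmall : M * z * (z + γ) ≤ (s - 1) / 2 := by
    have h1 : M * z * (z + γ) ≤ M * δ * (δ + 1) :=
      mul_le_mul (mul_le_mul_of_nonneg_left hzlt.le hM0.le) hzγ1
        (add_nonneg hz0.le hγpos.le) (mul_nonneg hM0.le hδ0.le)
    have h2 : M * δ ≤ (s - 1) / 4 := by
      have h2a := mul_le_mul_of_nonneg_left hδ2 hM0.le
      have h2b : M * ((s - 1) / (4 * M)) = (s - 1) / 4 := by
        field_simp
      linarith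
    have h3 := mul_le_mul_of_nonneg_right h2 hδ0.le
    have h4 : (s - 1) / 4 * δ ≤ (s - 1) / 4 := by nlinarith
    nlinarith [h1, h3, h4, h2]
  have hρ : z ≤ 2 * γ / (s - 1) := by
    have h1 : (s - 1) * z - γ ≤ M * z ^ 2 * (z + γ) := le_trans (le_abs_self _) habs
    have h2 : M * z ^ 2 * (z + γ) ≤ (s - 1) / 2 * z := by
      have := mul_le_mul_of_nonneg_right hMsmall hz0.le
      nlinarith
    rw [le_div_iff₀ hs1']
    linarith
  rw [Real.dist_eq]
  have heq2 : z / γ - 1 / (s - 1) = ((s - 1) * z - γ) / (γ * (s - 1)) := by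
    field_simp
  have hnum : |(s - 1) * z - γ| ≤ 2 * M * z * (z + γ) * γ / (s - 1) := by
    refine habs.trans ?_
    have h3 : z * z ≤ 2 * γ / (s - 1) * z := mul_le_mul_of_nonneg_right hρ hz0.le
    have h4 : M * z ^ 2 * (z + γ) ≤ M * (2 * γ / (s - 1) * z) * (z + γ) := by
      have hMz : (0:ℝ) ≤ M * (z + γ) := by positivity
      nlinarith
    refine h4.trans (le_of_eq ?_)
    field_simp
  have hkey : |z / γ - 1 / (s - 1)| ≤ 2 * M * z * (z + γ) / (s - 1) ^ 2 := by
    rw [heq2, abs_div, abs_of_pos (mul_pos hγpos hs1')]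
    rw [div_le_iff₀ (mul_pos hγpos hs1')]
    have hgoal : 2 * M * z * (z + γ) / (s - 1) ^ 2 * (γ * (s - 1)) =
        2 * M * z * (z + γ) * γ / (s - 1) := by
      field_simp
    rw [hgoal]
    exact hnum
  have hfin : 2 * M * z * (z + γ) / (s - 1) ^ 2 < ε := by
    rw [div_lt_iff₀ (by positivity)]
    have h5 : 2 * M * z * (z + γ) < 2 * M * δ * (δ + 1) := by
      have h5a : 2 * M * z * (z + γ) ≤ 2 * M * z * (δ + 1) := by
        nlinarith [mul_nonneg (mul_nonneg (by linarith : (0:ℝ) ≤ 2 * M) hz0.le)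
          (by linarith : (0:ℝ) ≤ δ + 1 - (z + γ))]
      have hpos : (0:ℝ) < 2 * M * (δ + 1) := by nlinarith [hM0, hδ0]
      have h5b := mul_lt_mul_of_pos_left hzlt hpos
      nlinarith [h5a, h5b]
    have h6 : 2 * M * δ * (δ + 1) ≤ 4 * M * δ := by
      nlinarith [mul_nonneg (mul_nonneg hM0.le hδ0.le) (by linarith : (0:ℝ) ≤ 1 - δ)]
    have h7 : 4 * M * δ ≤ ε * (s - 1) ^ 2 / 2 := by
      have h7a := mul_le_mul_of_nonneg_left hδ3 (by linarith : (0:ℝ) ≤ 4 * M)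
      have h7b : 4 * M * (ε * (s - 1) ^ 2 / (8 * M)) = ε * (s - 1) ^ 2 / 2 := by
        field_simp
        ring
      linarith
    have h8 : ε * (s - 1) ^ 2 / 2 < ε * (s - 1) ^ 2 := by
      have : (0:ℝ) < ε * (s - 1) ^ 2 := by positivity
      linarith
    linarith
  exact lt_of_le_of_lt hkey hfin
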